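/- Let P = (E, ρ) be a (q,m)-polymatroid on E = F_q^n with ρ(E) < mn. Then P has a circuit of dimension at most floor(ρ(E)/m) + 1; equivalently, the girth g(P) (minimum dimension of a circuit) satisfies g(P) ≤ floor(ρ(E)/m) + 1. -/

import Mathlib

/-- A `(q,m)`-polymatroid with `ρ(E) < mn` has a circuit of dimension at most
`⌊ρ(E)/m⌋ + 1`. -/
theorem exists_small_circuit {F : Type} [Field F] [Fintype F] (n m : ℕ)
    (ρ : Submodule F (Fin n → F) → ℕ)
    (hR1 : ∀ A : Submodule F (Fin n → F), ρ A ≤ m * Module.finrank F A)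
    (hR2 : ∀ A B : Submodule F (Fin n → F), A ≤ B → ρ A ≤ ρ B)
    (hR3 : ∀ A B : Submodule F (Fin n → F), ρ (A ⊔ B) + ρ (A ⊓ B) ≤ ρ A + ρ B)
    (h : ρ ⊤ < m * n) :
    ∃ D : Submodule F (Fin n → F),
      (ρ D ≠ m * Module.finrank F D ∧
        ∀ D' : Submodule F (Fin n → F), D' < D → ρ D' = m * Module.finrank F D') ∧
      Module.finrank F D ≤ ρ ⊤ / m + 1 := by
  classical
  -- `⊤` is dependent
  have htop : ρ ⊤ < m * Module.finrank F (⊤ : Submodule F (Fin n → F)) := by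
    rw [finrank_top]
    simpa using h
  -- choose a dependent subspace of minimal dimension
  have hex : ∃ d : ℕ, ∃ D : Submodule F (Fin n → F),
      Module.finrank F D = d ∧ ρ D < m * Module.finrank F D :=
    ⟨_, ⊤, rfl, htop⟩
  obtain ⟨D, hDrank, hDdep⟩ := Nat.find_spec hex
  have hmin : ∀ D' : Submodule F (Fin n → F),
      Module.finrank F D' < Nat.find hex → ρ D' = m * Module.finrank F D' := by
    intro D' hlt
    have := Nat.find_min hex hlt
    push_neg at this
    have h2 := this D' rfl
    exact le_antisymm (hR1 D') h2
  have hproper : ∀ D' : Submodule F (Fin n → F), D' < D →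
      ρ D' = m * Module.finrank F D' := by
    intro D' hlt
    exact hmin D' (hDrank ▸ Submodule.finrank_lt_finrank_of_lt hlt)
  refine ⟨D, ⟨Nat.ne_of_lt hDdep, hproper⟩, ?_⟩
  -- `m ≥ 1` and `finrank D ≥ 1`
  set d := Module.finrank F D with hd
  have hpos : 0 < m * d := lt_of_le_of_lt (Nat.zero_le _) hDdep
  have hm : 0 < m := Nat.pos_of_mul_pos_left (by rwa [Nat.mul_comm] at hpos)
  have hdpos : 0 < d := Nat.pos_of_mul_pos_left hpos
  -- construct a hyperplane of `D`
  have : FiniteDimensional F D := inferInstance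
  let b : Module.Basis (Fin d) F D := Module.finBasis F D
  let v : Fin (d - 1) → (Fin n → F) := fun i => (b (Fin.castLE (Nat.sub_le d 1) i) : Fin n → F)
  have hvli : LinearIndependent F v := by
    have h1 : LinearIndependent F (fun i : Fin (d - 1) => b (Fin.castLE (Nat.sub_le d 1) i)) :=
      b.linearIndependent.comp _ (Fin.castLE_injective _)
    exact h1.map' D.subtype D.ker_subtype
  set D' : Submodule F (Fin n → F) := Submodule.span F (Set.range v) with hD'
  have hD'rank : Module.finrank F D' = d - 1 := by
    rw [hD', finrank_span_eq_card hvli, Fintype.card_fin]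
  have hD'le : D' ≤ D := by
    rw [hD', Submodule.span_le]
    rintro _ ⟨i, rfl⟩
    exact (b (Fin.castLE (Nat.sub_le d 1) i)).2
  have hD'lt : D' < D := lt_of_le_of_ne hD'le (by
    intro heq
    rw [heq] at hD'rank
    omega)
  -- conclude the bound
  have h1 : ρ D' = m * (d - 1) := by rw [hproper D' hD'lt, hD'rank]
  have h2 : m * (d - 1) ≤ ρ ⊤ := h1 ▸ hR2 D' ⊤ le_top
  have h3 : d - 1 ≤ ρ ⊤ / m := (Nat.le_div_iff_mul_le hm).mpr (by rwa [Nat.mul_comm])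
  omega
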